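/- Let θ, z : (a,b) → ℝ be C¹ functions with z > 0 satisfying θ'(t)² + cos²θ(t)/z(t)² = 1 and z'(t) = sin θ(t) for all t. If θ'(t₀) = 0 at some t₀ ∈ (a,b), then z(t₀) = 1 and sin θ(t₀) = 0. -/

import Mathlib

theorem deriv_zero_imp (a b t₀ : ℝ) (θ z θ' : ℝ → ℝ)
    (ht₀ : t₀ ∈ Set.Ioo a b)
    (hzpos : ∀ t ∈ Set.Ioo a b, 0 < z t)
    (hθ : ∀ t ∈ Set.Ioo a b, HasDerivAt θ (θ' t) t)
    (hθ'c : ContinuousOn θ' (Set.Ioo a b))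
    (hz' : ∀ t ∈ Set.Ioo a b, HasDerivAt z (Real.sin (θ t)) t)
    (heq : ∀ t ∈ Set.Ioo a b, (θ' t) ^ 2 + (Real.cos (θ t)) ^ 2 / (z t) ^ 2 = 1)
    (h0 : θ' t₀ = 0) :
    z t₀ = 1 ∧ Real.sin (θ t₀) = 0 := by
  set g : ℝ → ℝ := fun t => z t ^ 2 - Real.cos (θ t) ^ 2 with hg
  -- g t = (z t * θ' t)^2 on Ioo
  have hgval : ∀ t ∈ Set.Ioo a b, g t = (z t * θ' t) ^ 2 := by
    intro t ht
    have hz2 : (z t) ^ 2 ≠ 0 := pow_ne_zero _ (hzpos t ht).ne'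
    have h := heq t ht
    have : (θ' t) ^ 2 * (z t)^2 + (Real.cos (θ t)) ^ 2 = (z t)^2 := by
      calc (θ' t) ^ 2 * (z t)^2 + (Real.cos (θ t)) ^ 2
          = ((θ' t) ^ 2 + (Real.cos (θ t)) ^ 2 / (z t) ^ 2) * (z t)^2 := by
            rw [add_mul, div_mul_cancel₀ _ hz2]
        _ = (z t)^2 := by rw [h, one_mul]
    simp only [hg]
    ring_nf
    nlinarith [this]
  -- derivative of g
  have hgderiv : ∀ t ∈ Set.Ioo a b,
      HasDerivAt g (2 * z t * Real.sin (θ t) + 2 * Real.cos (θ t) * Real.sin (θ t) * θ' t) t := by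
    intro t ht
    have h1 : HasDerivAt (fun s => z s ^ 2) (2 * z t * Real.sin (θ t)) t := by
      have := (hz' t ht).fun_pow 2
      simpa [mul_comm, mul_assoc, mul_left_comm] using this
    have hc : HasDerivAt (fun s => Real.cos (θ s)) (-Real.sin (θ t) * θ' t) t :=
      (Real.hasDerivAt_cos (θ t)).comp t (hθ t ht)
    have h2 : HasDerivAt (fun s => Real.cos (θ s) ^ 2)
        (-(2 * Real.cos (θ t) * Real.sin (θ t) * θ' t)) t := by
      have := hc.fun_pow 2
      refine this.congr_deriv ?_
      simp only [Nat.cast_ofNat, show (2:ℕ) - 1 = 1 from rfl, pow_one]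
      ring
    have := h1.fun_sub h2
    simpa [hg, sub_neg_eq_add] using this
  -- t₀ is a local min of g
  have hmin : IsLocalMin g t₀ := by
    have hnhds : Set.Ioo a b ∈ nhds t₀ := (isOpen_Ioo).mem_nhds ht₀
    have hg0 : g t₀ = 0 := by rw [hgval t₀ ht₀, h0]; ring
    rw [IsLocalMin, IsMinFilter]
    filter_upwards [hnhds] with t ht
    rw [hg0, hgval t ht]
    positivity
  have hd0 : 2 * z t₀ * Real.sin (θ t₀) + 2 * Real.cos (θ t₀) * Real.sin (θ t₀) * θ' t₀ = 0 :=
    hmin.hasDerivAt_eq_zero (hgderiv t₀ ht₀)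
  rw [h0] at hd0
  have hzpos₀ := hzpos t₀ ht₀
  have hsin : Real.sin (θ t₀) = 0 := by
    have : 2 * z t₀ * Real.sin (θ t₀) = 0 := by linarith
    rcases mul_eq_zero.1 this with h | h
    · exfalso; nlinarith
    · exact h
  have hcos : Real.cos (θ t₀) ^ 2 = 1 := by
    have := Real.sin_sq_add_cos_sq (θ t₀)
    rw [hsin] at this; nlinarith
  have h := heq t₀ ht₀
  rw [h0, hcos] at h
  have hz2 : z t₀ ^ 2 = 1 := by
    field_simp at h
    nlinarith
  constructor
  · nlinarith
  · exact hsin
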